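/- Let (E,𝒫) be a random locally convex module over K with base (Ω,𝓕,P) and f : E → L⁰(𝓕,K) a K-linear map. Then the following are equivalent: (i) f is a.s. bounded of type I, i.e., there exist ξ ∈ L⁰₊(𝓕) and a finite Q ⊆ 𝒫 with |f(x)| ≤ ξ·‖x‖_Q a.e. for all x ∈ E; (ii) f is L⁰(𝓕,K)-linear and continuous from E with the locally L⁰-convex topology to L⁰(𝓕,K) with its locally L⁰-convex topology, i.e., for every ε ∈ L⁰₊₊(𝓕) there exist δ ∈ L⁰₊₊(𝓕) and a finite Q ⊆ 𝒫 such that ‖x‖_Q ≤ δ a.e. implies |f(x)| ≤ ε a.e. (In the paper's notation: E*_I = E*_c.) -/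

import Mathlib

open MeasureTheory Filter

/-- `⋁{‖x‖ : ‖·‖ ∈ Q}` for a finite subfamily `Q` of a family of `L⁰`-seminorms, evaluated
pointwise (the seminorms being a.e. nonnegative, truncating negative values is harmless, and
the supremum over the empty family is `0`). -/
noncomputable def finSup {ι : Type*} (Q : Finset ι) (g : ι → ℝ) : ℝ :=
  ((Q.sup fun i => Real.toNNReal (g i) : NNReal) : ℝ)

lemma finSup_nonneg {ι : Type*} (Q : Finset ι) (g : ι → ℝ) : 0 ≤ finSup Q g :=
  NNReal.coe_nonneg _

lemma le_finSup {ι : Type*} {Q : Finset ι} {g : ι → ℝ} {i : ι} (hi : i ∈ Q) :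
    g i ≤ finSup Q g :=
  (Real.le_coe_toNNReal (g i)).trans
    (NNReal.coe_le_coe.2 (Finset.le_sup (f := fun i => Real.toNNReal (g i)) hi))

lemma finSup_le_iff {ι : Type*} {Q : Finset ι} {g : ι → ℝ} {c : ℝ} (hc : 0 ≤ c) :
    finSup Q g ≤ c ↔ ∀ i ∈ Q, g i ≤ c := by
  rw [finSup]
  rw [show c = ((Real.toNNReal c : NNReal) : ℝ) from (Real.coe_toNNReal c hc).symm]
  rw [NNReal.coe_le_coe, Finset.sup_le_iff]
  refine forall₂_congr fun i _ => ?_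
  rw [Real.toNNReal_le_toNNReal_iff hc, Real.coe_toNNReal c hc]

lemma finSup_congr {ι : Type*} {Q : Finset ι} {g h : ι → ℝ} (H : ∀ i ∈ Q, g i = h i) :
    finSup Q g = finSup Q h := by
  unfold finSup
  rw [Finset.sup_congr rfl fun i hi => by rw [H i hi]]

lemma finSup_mul {ι : Type*} (Q : Finset ι) (g : ι → ℝ) {c : ℝ} (hc : 0 ≤ c) :
    finSup Q (fun i => c * g i) = c * finSup Q g := by
  unfold finSup
  rw [show (Q.sup fun i => Real.toNNReal (c * g i)) =
      Real.toNNReal c * Q.sup fun i => Real.toNNReal (g i) by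
    rw [NNReal.mul_finset_sup]
    exact Finset.sup_congr rfl fun i _ => Real.toNNReal_mul hc]
  rw [NNReal.coe_mul, Real.coe_toNNReal c hc]

lemma finSup_measurable {ι Ω : Type*} [MeasurableSpace Ω] (Q : Finset ι) (g : ι → Ω → ℝ)
    (hg : ∀ i ∈ Q, Measurable (g i)) :
    Measurable fun ω => finSup Q (fun i => g i ω) := by
  classical
  induction Q using Finset.induction with
  | empty => simp only [finSup, Finset.sup_empty]; exact measurable_const
  | @insert a s ha ih =>
    have h1 : (fun ω => finSup (insert a s) (fun i => g i ω)) =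
        fun ω => max (max (g a ω) 0) (finSup s (fun i => g i ω)) := by
      funext ω
      simp only [finSup, Finset.sup_insert]; push_cast [Real.coe_toNNReal']; rfl
    rw [h1]
    exact (((hg a (Finset.mem_insert_self a s)).max measurable_const).max
      (ih fun i hi => hg i (Finset.mem_insert_of_mem hi)))

lemma aef_add_mul {Ω K : Type*} [MeasurableSpace Ω] {P : Measure Ω} [RCLike K]
    (a b c : Ω →ₘ[P] K) : (a + b) * c = a * c + b * c := by
  refine AEEqFun.ext ?_
  filter_upwards [AEEqFun.coeFn_mul (a + b) c, AEEqFun.coeFn_add a b,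
    AEEqFun.coeFn_mul a c, AEEqFun.coeFn_mul b c, AEEqFun.coeFn_add (a * c) (b * c)]
    with ω h1 h2 h3 h4 h5
  simp only [h1, h2, h3, h4, h5, Pi.mul_apply, Pi.add_apply]
  ring

/-- Let `(E,𝒫)` be a random locally convex module over `K` with base
`(Ω,𝓕,P)` and `f : E → L⁰(𝓕,K)` a `K`-linear map.  Then `f` is a.s. bounded of type I iff
`f` is `L⁰(𝓕,K)`-linear and continuous for the locally `L⁰`-convex topologies
(i.e. `E*_I = E*_c`). -/
theorem stmt11
    {Ω K ι E : Type*} [MeasurableSpace Ω] {P : Measure Ω} [IsProbabilityMeasure P]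
    [RCLike K] [AddCommGroup E] [SMul (Ω →ₘ[P] K) E]
    -- `E` is a left module over `L⁰(𝓕,K)`
    (hmoda : ∀ (ξ : Ω →ₘ[P] K) (x y : E), ξ • (x + y) = ξ • x + ξ • y)
    (hmodb : ∀ (ξ η : Ω →ₘ[P] K) (x : E), (ξ + η) • x = ξ • x + η • x)
    (hmodc : ∀ (ξ η : Ω →ₘ[P] K) (x : E), (ξ * η) • x = ξ • (η • x))
    (hmodd : ∀ x : E, (1 : Ω →ₘ[P] K) • x = x)
    -- `𝒫 = {p i : i ∈ ι}` is a separating family of `L⁰`-seminorms on `E`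
    (p : ι → E → Ω →ₘ[P] ℝ)
    (hp_pos : ∀ i x, ∀ᵐ ω ∂P, 0 ≤ p i x ω)
    (hp_tri : ∀ i x y, ∀ᵐ ω ∂P, p i (x + y) ω ≤ p i x ω + p i y ω)
    (hp_hom : ∀ i (ξ : Ω →ₘ[P] K) (x : E), ∀ᵐ ω ∂P, p i (ξ • x) ω = ‖ξ ω‖ * p i x ω)
    (hp_sep : ∀ x : E, (∀ i, ∀ᵐ ω ∂P, p i x ω = 0) → x = 0)
    -- `f` is a `K`-linear map into `L⁰(𝓕,K)`
    (f : E → Ω →ₘ[P] K)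
    (hf_add : ∀ x y, f (x + y) = f x + f y)
    (hf_smulK : ∀ (c : K) (x : E),
      f ((AEEqFun.const Ω c : Ω →ₘ[P] K) • x) = (AEEqFun.const Ω c : Ω →ₘ[P] K) * f x) :
    -- (i) `f` is a.s. bounded of type I …
    (∃ (ξ : Ω →ₘ[P] ℝ) (Q : Finset ι), (∀ᵐ ω ∂P, 0 ≤ ξ ω) ∧
      ∀ x, ∀ᵐ ω ∂P, ‖f x ω‖ ≤ ξ ω * finSup Q (fun i => p i x ω))
    ↔
    -- (ii) … iff `f` is `L⁰(𝓕,K)`-linear and `𝒯_c`-continuous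
    ((∀ (ξ : Ω →ₘ[P] K) (x : E), f (ξ • x) = ξ * f x) ∧
      ∀ ε : Ω →ₘ[P] ℝ, (∀ᵐ ω ∂P, 0 < ε ω) →
        ∃ (δ : Ω →ₘ[P] ℝ) (Q : Finset ι), (∀ᵐ ω ∂P, 0 < δ ω) ∧
          ∀ x, (∀ᵐ ω ∂P, finSup Q (fun i => p i x ω) ≤ δ ω) →
            ∀ᵐ ω ∂P, ‖f x ω‖ ≤ ε ω) := by
  constructor
  · rintro ⟨ξ, Q, hξ0, hbd⟩
    -- a.e. identification of ‖·‖_Q of a scalar multiple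
    have hsup_smul : ∀ (η : Ω →ₘ[P] K) (x : E), ∀ᵐ ω ∂P,
        finSup Q (fun i => p i (η • x) ω) = ‖η ω‖ * finSup Q (fun i => p i x ω) := by
      intro η x
      have h1 : ∀ᵐ ω ∂P, ∀ i ∈ Q, p i (η • x) ω = ‖η ω‖ * p i x ω :=
        (ae_ball_iff Q.countable_toSet).2 fun i _ => hp_hom i η x
      filter_upwards [h1] with ω hω
      rw [finSup_congr hω, finSup_mul Q _ (norm_nonneg (η ω))]
    -- core bound
    have core : ∀ (η : Ω →ₘ[P] K) (x : E), ∀ᵐ ω ∂P,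
        ‖f (η • x) ω‖ ≤ ξ ω * (‖η ω‖ * finSup Q (fun i => p i x ω)) := by
      intro η x
      filter_upwards [hbd (η • x), hsup_smul η x] with ω h1 h2
      rw [← h2]; exact h1
    -- basic consequences of additivity
    have hf0 : f 0 = 0 := by
      have := hf_add 0 0
      rw [add_zero] at this
      exact add_left_cancel (this.symm.trans (add_zero _).symm)
    -- indicator functions
    have hind : ∀ (s : Set Ω) (hs : MeasurableSet s) (x : E),
        f ((AEEqFun.mk (s.indicator fun _ => (1:K))
            ((stronglyMeasurable_const.indicator hs).aestronglyMeasurable (μ := P))) • x)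
          = (AEEqFun.mk (s.indicator fun _ => (1:K))
            ((stronglyMeasurable_const.indicator hs).aestronglyMeasurable (μ := P))) * f x := by
      intro s hs x
      set χ : Ω →ₘ[P] K := AEEqFun.mk (s.indicator fun _ => (1:K))
          ((stronglyMeasurable_const.indicator hs).aestronglyMeasurable (μ := P)) with hχdef
      set χ' : Ω →ₘ[P] K := 1 - χ with hχ'def
      have hsum : χ + χ' = 1 := by rw [hχ'def]; abel
      have hx : χ • x + χ' • x = x := by rw [← hmodb, hsum, hmodd]
      have hfx : f x = f (χ • x) + f (χ' • x) := by
        rw [← hf_add, hx]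
      have hχcoe : ⇑χ =ᵐ[P] s.indicator fun _ => (1:K) := AEEqFun.coeFn_mk _ _
      have hχ'coe : ⇑χ' =ᵐ[P] fun ω => 1 - s.indicator (fun _ => (1:K)) ω := by
        rw [hχ'def]
        filter_upwards [AEEqFun.coeFn_sub (1 : Ω →ₘ[P] K) χ, hχcoe,
          AEEqFun.coeFn_one (β := K) (μ := P)] with ω h1 h2 h3
        simp [h1, h2, h3]
      refine AEEqFun.ext ?_
      filter_upwards [core χ x, core χ' x, hχcoe, hχ'coe,
        hfx ▸ AEEqFun.coeFn_add (f (χ • x)) (f (χ' • x)),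
        AEEqFun.coeFn_mul χ (f x)] with ω hc1 hc2 h1 h2 h3 h4
      rw [h4, Pi.mul_apply, h1]
      by_cases hω : ω ∈ s
      · have hz : f (χ' • x) ω = 0 := by
          have : ‖χ' ω‖ = 0 := by rw [h2]; simp [Set.indicator_of_mem hω]
          rw [this, zero_mul, mul_zero] at hc2
          exact norm_le_zero_iff.1 hc2
        rw [h3, Pi.add_apply, hz, add_zero, Set.indicator_of_mem hω, one_mul]
      · have hz : f (χ • x) ω = 0 := by
          have : ‖χ ω‖ = 0 := by rw [h1]; simp [Set.indicator_of_notMem hω]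
          rw [this, zero_mul, mul_zero] at hc1
          exact norm_le_zero_iff.1 hc1
        rw [hz, Set.indicator_of_notMem hω, zero_mul]
    -- simple functions
    have hsimple : ∀ (s : SimpleFunc Ω K) (x : E),
        f ((AEEqFun.mk ⇑s (s.aestronglyMeasurable (μ := P))) • x)
          = (AEEqFun.mk ⇑s (s.aestronglyMeasurable (μ := P))) * f x := by
      intro s x
      induction s using SimpleFunc.induction with
      | @const c s hs =>
        have heq : AEEqFun.mk ⇑(SimpleFunc.piecewise s hs (SimpleFunc.const Ω c)
              (SimpleFunc.const Ω 0))
              ((SimpleFunc.piecewise s hs (SimpleFunc.const Ω c)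
                (SimpleFunc.const Ω 0)).aestronglyMeasurable (μ := P))
            = (AEEqFun.const Ω c : Ω →ₘ[P] K) * (AEEqFun.mk (s.indicator fun _ => (1:K))
              ((stronglyMeasurable_const.indicator hs).aestronglyMeasurable (μ := P))) := by
          refine AEEqFun.ext ?_
          filter_upwards [AEEqFun.coeFn_mk ⇑(SimpleFunc.piecewise s hs (SimpleFunc.const Ω c)
              (SimpleFunc.const Ω 0)) _,
            AEEqFun.coeFn_mul (AEEqFun.const Ω c : Ω →ₘ[P] K) (AEEqFun.mk _ _),
            AEEqFun.coeFn_const Ω (b := c) (μ := P),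
            AEEqFun.coeFn_mk (s.indicator fun _ => (1:K)) _] with ω h1 h2 h3 h4
          rw [h1, h2, Pi.mul_apply, h3, h4]
          by_cases hω : ω ∈ s <;>
            simp [SimpleFunc.piecewise_apply, Set.indicator, hω, Function.const]
        rw [heq, hmodc, hf_smulK, hind s hs x, mul_assoc]
      | add hdisj ha hb =>
        rename_i a b
        have heq : AEEqFun.mk ⇑(a + b) ((a + b).aestronglyMeasurable (μ := P))
            = AEEqFun.mk ⇑a (a.aestronglyMeasurable (μ := P))
              + AEEqFun.mk ⇑b (b.aestronglyMeasurable (μ := P)) := by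
          refine AEEqFun.ext ?_
          filter_upwards [AEEqFun.coeFn_mk ⇑(a + b) _,
            AEEqFun.coeFn_add (AEEqFun.mk ⇑a (a.aestronglyMeasurable (μ := P)))
              (AEEqFun.mk ⇑b (b.aestronglyMeasurable (μ := P))),
            AEEqFun.coeFn_mk ⇑a (a.aestronglyMeasurable (μ := P)),
            AEEqFun.coeFn_mk ⇑b (b.aestronglyMeasurable (μ := P))] with ω h1 h2 h3 h4
          rw [h1, h2, Pi.add_apply, h3, h4, SimpleFunc.coe_add, Pi.add_apply]
        rw [heq, hmodb, hf_add, ha, hb, ← aef_add_mul]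
    -- full `L⁰`-linearity
    have hlin : ∀ (η : Ω →ₘ[P] K) (x : E), f (η • x) = η * f x := by
      intro η x
      have hη := η.aestronglyMeasurable
      have hsm : StronglyMeasurable (hη.mk ⇑η) := hη.stronglyMeasurable_mk
      have hae : ⇑η =ᵐ[P] hη.mk ⇑η := hη.ae_eq_mk
      set s : ℕ → SimpleFunc Ω K := hsm.approx with hsdef
      set ηn : ℕ → Ω →ₘ[P] K :=
        fun n => AEEqFun.mk ⇑(s n) ((s n).aestronglyMeasurable (μ := P)) with hηndef
      have key : ∀ n, f (η • x) - ηn n * f x = f ((η - ηn n) • x) := by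
        intro n
        have e1 : (η - ηn n) • x + ηn n • x = η • x := by
          rw [← hmodb, sub_add_cancel]
        calc f (η • x) - ηn n * f x
            = f ((η - ηn n) • x + ηn n • x) - ηn n * f x := by rw [e1]
          _ = f ((η - ηn n) • x) + f (ηn n • x) - ηn n * f x := by rw [hf_add]
          _ = f ((η - ηn n) • x) := by rw [hηndef, hsimple (s n) x]; abel
      have hcoeηn : ∀ n, ⇑(ηn n) =ᵐ[P] ⇑(s n) := fun n => AEEqFun.coeFn_mk _ _
      have hsub : ∀ n, ⇑(η - ηn n) =ᵐ[P] fun ω => hη.mk ⇑η ω - s n ω := by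
        intro n
        filter_upwards [AEEqFun.coeFn_sub η (ηn n), hcoeηn n, hae] with ω h1 h2 h3
        simp [h1, h2, ← h3]
      have hkey : ∀ n, ∀ᵐ ω ∂P,
          ‖f (η • x) ω - s n ω * f x ω‖ ≤
            ξ ω * (‖hη.mk ⇑η ω - s n ω‖ * finSup Q (fun i => p i x ω)) := by
        intro n
        filter_upwards [core (η - ηn n) x, hsub n, hcoeηn n,
          (key n) ▸ AEEqFun.coeFn_sub (f (η • x)) (ηn n * f x),
          AEEqFun.coeFn_mul (ηn n) (f x)] with ω h1 h2 h3 h4 h5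
        have : f ((η - ηn n) • x) ω = f (η • x) ω - s n ω * f x ω := by
          rw [h4, Pi.sub_apply, h5, Pi.mul_apply, h3]
        rw [this, h2] at h1
        exact h1
      refine AEEqFun.ext ?_
      filter_upwards [ae_all_iff.2 hkey, AEEqFun.coeFn_mul η (f x), hae] with ω h1 h2 h3
      rw [h2, Pi.mul_apply, h3]
      have htend : Tendsto (fun n => s n ω * f x ω) atTop (nhds (hη.mk ⇑η ω * f x ω)) :=
        (hsm.tendsto_approx ω).mul_const _
      have hzero : Tendsto
          (fun n => ξ ω * (‖hη.mk ⇑η ω - s n ω‖ * finSup Q (fun i => p i x ω)))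
          atTop (nhds 0) := by
        have h4 : Tendsto (fun n => hη.mk ⇑η ω - s n ω) atTop (nhds 0) := by
          simpa using (tendsto_const_nhds (x := hη.mk ⇑η ω)).sub (hsm.tendsto_approx ω)
        have h5 := ((h4.norm.mul_const (finSup Q fun i => p i x ω)).const_mul (ξ ω))
        simpa using h5
      have htend2 : Tendsto (fun n => s n ω * f x ω) atTop (nhds (f (η • x) ω)) := by
        rw [tendsto_iff_norm_sub_tendsto_zero]
        refine squeeze_zero (fun n => norm_nonneg _) (fun n => ?_) hzero
        rw [norm_sub_rev]
        exact h1 n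
      exact tendsto_nhds_unique htend2 htend
    refine ⟨hlin, ?_⟩
    -- continuity
    intro ε hε
    have hξm := ξ.aestronglyMeasurable
    have hεm := ε.aestronglyMeasurable
    set ξ' : Ω → ℝ := hξm.mk ⇑ξ with hξ'def
    set ε' : Ω → ℝ := hεm.mk ⇑ε with hε'def
    have hδm : Measurable fun ω => ε' ω / (1 + max (ξ' ω) 0) :=
      (hεm.stronglyMeasurable_mk.measurable).div
        (measurable_const.add ((hξm.stronglyMeasurable_mk.measurable).max measurable_const))
    refine ⟨AEEqFun.mk (fun ω => ε' ω / (1 + max (ξ' ω) 0))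
      hδm.aestronglyMeasurable, Q, ?_, ?_⟩
    · filter_upwards [AEEqFun.coeFn_mk (fun ω => ε' ω / (1 + max (ξ' ω) 0))
        hδm.aestronglyMeasurable, hε, hεm.ae_eq_mk] with ω h1 h2 h3
      rw [h1]
      have hden : (0:ℝ) < 1 + max (ξ' ω) 0 := by positivity
      exact div_pos (by rw [hε'def, ← h3]; exact h2) hden
    · intro x hx
      filter_upwards [hbd x, hx, hξ0, hξm.ae_eq_mk, hεm.ae_eq_mk,
        AEEqFun.coeFn_mk (fun ω => ε' ω / (1 + max (ξ' ω) 0))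
          hδm.aestronglyMeasurable, hε] with ω h1 h2 h3 h4 h5 h6 h7
      rw [h6] at h2
      have hden : (0:ℝ) < 1 + max (ξ' ω) 0 := by positivity
      have hξeq : ξ ω = max (ξ' ω) 0 := by
        rw [hξ'def, ← h4]; exact (max_eq_left h3).symm
      calc ‖f x ω‖ ≤ ξ ω * finSup Q (fun i => p i x ω) := h1
        _ ≤ ξ ω * (ε' ω / (1 + max (ξ' ω) 0)) := by
            refine mul_le_mul_of_nonneg_left h2 h3
        _ = ε' ω * (max (ξ' ω) 0 / (1 + max (ξ' ω) 0)) := by rw [hξeq]; ring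
        _ ≤ ε' ω * 1 := by
            refine mul_le_mul_of_nonneg_left ?_ ?_
            · rw [div_le_one hden]; linarith
            · rw [hε'def, ← h5]; exact le_of_lt h7
        _ = ε ω := by rw [mul_one, h5]
  · rintro ⟨hlin, hcont⟩
    obtain ⟨δ, Q, hδpos, hQ⟩ := hcont (AEEqFun.const Ω (1:ℝ)) (by
      filter_upwards [AEEqFun.coeFn_const Ω (b := (1:ℝ)) (μ := P)] with ω h
      rw [h]; norm_num)
    have hδm := δ.aestronglyMeasurable
    set d : Ω → ℝ := hδm.mk ⇑δ with hddef
    have hdmeas : Measurable d := hδm.stronglyMeasurable_mk.measurable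
    have hdae : ⇑δ =ᵐ[P] d := hδm.ae_eq_mk
    have hinvmeas : Measurable fun ω => if 0 < d ω then (d ω)⁻¹ else 0 :=
      Measurable.ite (measurableSet_lt measurable_const hdmeas) hdmeas.inv measurable_const
    refine ⟨AEEqFun.mk _ hinvmeas.aestronglyMeasurable, Q, ?_, ?_⟩
    · filter_upwards [AEEqFun.coeFn_mk _ hinvmeas.aestronglyMeasurable] with ω h1
      rw [h1]
      split_ifs with h
      · positivity
      · exact le_refl 0
    · intro x
      have hq : ∀ i, ∃ g : Ω → ℝ, Measurable g ∧ ⇑(p i x) =ᵐ[P] g := fun i =>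
        ⟨(p i x).aestronglyMeasurable.mk _,
          ((p i x).aestronglyMeasurable.stronglyMeasurable_mk).measurable,
          (p i x).aestronglyMeasurable.ae_eq_mk⟩
      choose q hqmeas hqae using hq
      set S : Ω → ℝ := fun ω => finSup Q fun i => q i ω with hSdef
      have hSmeas : Measurable S := finSup_measurable Q q fun i _ => hqmeas i
      have hSae : ∀ᵐ ω ∂P, finSup Q (fun i => p i x ω) = S ω := by
        have h := (ae_ball_iff Q.countable_toSet).2 fun i _ => hqae i
        filter_upwards [h] with ω hω
        exact finSup_congr fun i hi => hω i hi
      have hS0 : ∀ ω, 0 ≤ S ω := fun ω => finSup_nonneg _ _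
      have hn : ∀ n : ℕ, ∀ᵐ ω ∂P,
          (d ω / (S ω + ((n:ℝ)+1)⁻¹)) * ‖f x ω‖ ≤ 1 := by
        intro n
        set c : ℝ := ((n:ℝ)+1)⁻¹ with hcdef
        have hc : 0 < c := by positivity
        have hgm : Measurable fun ω => d ω / (S ω + c) :=
          hdmeas.div (hSmeas.add measurable_const)
        set η : Ω →ₘ[P] K := AEEqFun.mk (fun ω => (RCLike.ofReal (d ω / (S ω + c)) : K))
          ((RCLike.continuous_ofReal.comp_stronglyMeasurable
            hgm.stronglyMeasurable).aestronglyMeasurable) with hηdef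
        have hηcoe : ⇑η =ᵐ[P] fun ω => (RCLike.ofReal (d ω / (S ω + c)) : K) :=
          AEEqFun.coeFn_mk _ _
        have h1 : ∀ᵐ ω ∂P, finSup Q (fun i => p i (η • x) ω) ≤ δ ω := by
          filter_upwards [(ae_ball_iff Q.countable_toSet).2 fun i _ => hp_hom i η x,
            hηcoe, hdae, hδpos, hSae] with ω hh1 hh2 hh3 hh4 hh5
          have hd : 0 < d ω := hh3 ▸ hh4
          have hSc : 0 < S ω + c := by have := hS0 ω; linarith
          have e1 : finSup Q (fun i => p i (η • x) ω)
              = ‖η ω‖ * finSup Q (fun i => p i x ω) := by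
            rw [finSup_congr hh1, finSup_mul Q _ (norm_nonneg (η ω))]
          rw [e1, hh5, hh2, RCLike.norm_ofReal,
            abs_of_nonneg (le_of_lt (div_pos hd hSc)), hh3]
          calc d ω / (S ω + c) * S ω = d ω * (S ω / (S ω + c)) := by ring
            _ ≤ d ω * 1 := by
                refine mul_le_mul_of_nonneg_left ?_ (le_of_lt hd)
                rw [div_le_one hSc]; linarith
            _ = d ω := mul_one _
        have h2 := hQ (η • x) h1
        rw [hlin η x] at h2
        filter_upwards [h2, hηcoe, AEEqFun.coeFn_mul η (f x),
          AEEqFun.coeFn_const Ω (b := (1:ℝ)) (μ := P)] with ω hh1 hh2 hh3 hh4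
        rw [hh3, Pi.mul_apply, norm_mul, hh2, RCLike.norm_ofReal] at hh1
        rw [hh4] at hh1
        calc d ω / (S ω + c) * ‖f x ω‖ ≤ |d ω / (S ω + c)| * ‖f x ω‖ :=
              mul_le_mul_of_nonneg_right (le_abs_self _) (norm_nonneg _)
          _ ≤ 1 := hh1
      filter_upwards [ae_all_iff.2 hn, hdae, hδpos, hSae,
        AEEqFun.coeFn_mk _ hinvmeas.aestronglyMeasurable] with ω h1 h2 h3 h4 h5
      rw [h5, h4]
      have hd : 0 < d ω := h2 ▸ h3
      rw [if_pos hd]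
      have hb : ∀ n : ℕ, ‖f x ω‖ ≤ (S ω + ((n:ℝ)+1)⁻¹) / d ω := by
        intro n
        have hc : (0:ℝ) < ((n:ℝ)+1)⁻¹ := by positivity
        have hSc : 0 < S ω + ((n:ℝ)+1)⁻¹ := by have := hS0 ω; linarith
        rw [le_div_iff₀ hd]
        have := h1 n
        rw [div_mul_eq_mul_div, div_le_one hSc] at this
        calc ‖f x ω‖ * d ω = d ω * ‖f x ω‖ := mul_comm _ _
          _ ≤ S ω + ((n:ℝ)+1)⁻¹ := this
      have hlim : Tendsto (fun n : ℕ => (S ω + ((n:ℝ)+1)⁻¹) / d ω) atTop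
          (nhds (S ω / d ω)) := by
        have h6 : Tendsto (fun n : ℕ => ((n:ℝ)+1)⁻¹) atTop (nhds 0) := by
          simpa [one_div] using tendsto_one_div_add_atTop_nhds_zero_nat (𝕜 := ℝ)
        have h7 : Tendsto (fun n : ℕ => S ω + ((n:ℝ)+1)⁻¹) atTop (nhds (S ω)) := by
          simpa using (tendsto_const_nhds (x := S ω)).add h6
        exact h7.div_const _
      have := ge_of_tendsto hlim (Eventually.of_forall hb)
      calc ‖f x ω‖ ≤ S ω / d ω := this
        _ = (d ω)⁻¹ * S ω := by rw [div_eq_inv_mul]
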